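/- Let n be a natural number with prime factorisation n = p_1^{α_1} ⋯ p_t^{α_t} (the p_i distinct primes). Then every skew brace of order n is a trivial brace (i.e., its additive group is abelian and a ∘ b = a + b for all a, b) if and only if α_i = 1 for every i and p_i does not divide p_j − 1 for all i ≠ j. -/

import Mathlib

/-- A skew (left) brace: a set with two group structures `(A,+)` and `(A,∘)`
(the latter written multiplicatively) satisfying
`a ∘ (b + c) = a ∘ b - a + a ∘ c`. -/
class SkewBrace (A : Type*) extends AddGroup A, Group A where
  skew_left_distrib : ∀ a b c : A, a * (b + c) = a * b - a + a * c

/-! ### Auxiliary general lemmas -/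

theorem SB.hom_trivial_of_coprime {G H : Type*} [Group G] [Group H] [Finite G] [Finite H]
    (f : G →* H) (h : Nat.Coprime (Nat.card G) (Nat.card H)) (g : G) : f g = 1 := by
  have h1 : orderOf (f g) ∣ Nat.card G := (orderOf_map_dvd f g).trans (orderOf_dvd_natCard g)
  have h2 : orderOf (f g) ∣ Nat.card H := orderOf_dvd_natCard _
  have := Nat.dvd_gcd h1 h2
  rw [Nat.Coprime.gcd_eq_one h] at this
  exact orderOf_eq_one_iff.mp (Nat.dvd_one.mp this)

theorem SB.sf_of_coprime_totient {n : ℕ} (h : Nat.Coprime n n.totient) :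
    Squarefree n := by
  rw [Nat.squarefree_iff_prime_squarefree]
  intro p hp hdvd
  have h1 : p ∣ n.totient := by
    have : p ∣ (p * p).totient := by
      have := Nat.totient_prime_pow hp (n := 2) (by norm_num)
      rw [pow_two] at this
      rw [this]; simp
    exact this.trans (Nat.totient_dvd_of_dvd hdvd)
  have h2 : p ∣ n := (dvd_mul_left p p).trans hdvd
  exact hp.one_lt.ne' (Nat.eq_one_of_dvd_coprimes h h2 h1)

theorem SB.coprime_totient_of_dvd {n d : ℕ} (hd : d ∣ n) (h : Nat.Coprime n n.totient) :
    Nat.Coprime d d.totient :=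
  Nat.Coprime.coprime_dvd_right (Nat.totient_dvd_of_dvd hd) (Nat.Coprime.coprime_dvd_left hd h)

theorem SB.coprime_minFac_sub_one {n : ℕ} (h1 : n ≠ 1) (h0 : n ≠ 0) :
    Nat.Coprime n (n.minFac - 1) := by
  rw [Nat.coprime_iff_gcd_eq_one]
  by_contra hg
  have hp := Nat.minFac_prime h1
  set g := Nat.gcd n (n.minFac - 1) with hgdef
  have hgn : g ∣ n := Nat.gcd_dvd_left _ _
  have hgp : g ∣ n.minFac - 1 := Nat.gcd_dvd_right _ _
  have hg0 : g ≠ 0 := fun hz => h0 (by simpa [hz] using hgn)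
  have h2 : 2 ≤ g := by omega
  have h2' := hp.two_le
  have hle : n.minFac ≤ g := Nat.minFac_le_of_dvd h2 hgn
  have : g ≤ n.minFac - 1 := Nat.le_of_dvd (by omega) hgp
  omega

/-- Every group whose order `n` satisfies `gcd(n, φ(n)) = 1` is cyclic. -/
theorem SB.isCyclic_of_coprime_totient_aux :
    ∀ n : ℕ, ∀ (G : Type) (_ : Group G) (_ : Finite G), Nat.card G = n →
      Nat.Coprime n n.totient → IsCyclic G := by
  intro n
  induction n using Nat.strong_induction_on with
  | _ n ih =>
    intro G _ _ hcard hco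
    rcases eq_or_ne n 1 with h1 | h1
    · haveI : Subsingleton G := by
        rw [h1] at hcard
        exact (Nat.card_eq_one_iff_unique.mp hcard).1
      infer_instance
    have hn0 : n ≠ 0 := by
      rw [← hcard]; exact Nat.card_pos.ne'
    set p := n.minFac with hpdef
    have hp : p.Prime := Nat.minFac_prime h1
    haveI : Fact p.Prime := ⟨hp⟩
    have hpn : p ∣ n := Nat.minFac_dvd n
    have hsf : Squarefree n := SB.sf_of_coprime_totient hco
    have hfact : n.factorization p = 1 := by
      have hle := (Nat.squarefree_iff_factorization_le_one hn0).mp hsf p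
      have hge : 1 ≤ n.factorization p := by
        rw [← Nat.Prime.dvd_iff_one_le_factorization hp hn0]; exact hpn
      omega
    haveI : Finite (Sylow p G) :=
      Finite.of_injective (fun P : Sylow p G => (P : Set G)) fun P Q h => by
        ext x; exact Set.ext_iff.mp h x
    obtain ⟨P⟩ : Nonempty (Sylow p G) := inferInstance
    have hcardP : Nat.card P = p := by
      rw [Sylow.card_eq_multiplicity, hcard, hfact, pow_one]
    -- the normalizer of `P` centralizes `P`
    have hNC : Subgroup.normalizer ((P : Subgroup G) : Set G) ≤ Subgroup.centralizer (P : Set G) := by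
      intro g hg
      set Q := (P : Subgroup G).subgroupOf (Subgroup.normalizer ((P : Subgroup G) : Set G)) with hQdef
      haveI : Q.Normal := Subgroup.normal_in_normalizer
      have hQcard : Nat.card Q = p := by
        rw [Nat.card_congr (Subgroup.subgroupOfEquivOfLe Subgroup.le_normalizer).toEquiv]
        exact hcardP
      haveI : IsCyclic Q := isCyclic_of_prime_card hQcard
      have hAut : Nat.card (MulAut Q) = p - 1 := by
        rw [IsCyclic.card_mulAut, hQcard, Nat.totient_prime hp]
      have hco' : Nat.Coprime (Nat.card (Subgroup.normalizer ((P : Subgroup G) : Set G))) (Nat.card (MulAut Q)) := by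
        rw [hAut]
        exact Nat.Coprime.coprime_dvd_left (hcard ▸ Subgroup.card_subgroup_dvd_card _)
          (SB.coprime_minFac_sub_one h1 hn0)
      have htriv := SB.hom_trivial_of_coprime (MulAut.conjNormal :
        Subgroup.normalizer ((P : Subgroup G) : Set G) →* MulAut Q) hco' ⟨g, hg⟩
      rw [Subgroup.mem_centralizer_iff]
      intro x hx
      have hxQ : (⟨x, Subgroup.le_normalizer hx⟩ : Subgroup.normalizer ((P : Subgroup G) : Set G)) ∈ Q :=
        Subgroup.mem_subgroupOf.mpr hx
      have := congrArg Subtype.val (congrArg Subtype.val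
        (MulEquiv.ext_iff.mp htriv ⟨⟨x, Subgroup.le_normalizer hx⟩, hxQ⟩))
      rw [MulAut.conjNormal_apply] at this
      simp only [MulAut.one_apply] at this
      push_cast at this
      rw [mul_inv_eq_iff_eq_mul] at this
      exact this.symm
    -- Burnside's normal `p`-complement
    set K := (MonoidHom.transferSylow P hNC).ker with hKdef
    have hcomp := MonoidHom.ker_transferSylow_isComplement' P hNC
    have hK : Nat.card K * p = n := by
      rw [← hcardP, ← hcard]; exact hcomp.card_mul
    set m := Nat.card K with hmdef
    have hm0 : m ≠ 0 := Nat.card_pos.ne'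
    have hmdvd : m ∣ n := Dvd.intro_left p (by rw [mul_comm]; exact hK)
    have hmlt : m < n := by
      have := hp.two_le
      nlinarith [Nat.pos_of_ne_zero hm0]
    haveI : IsCyclic K :=
      ih m hmlt K inferInstance inferInstance rfl (SB.coprime_totient_of_dvd hmdvd hco)
    -- conjugation on `K` is trivial, so `K` is central
    have hAutK : Nat.card (MulAut K) = m.totient := by rw [IsCyclic.card_mulAut]
    have hcoK : Nat.Coprime (Nat.card G) (Nat.card (MulAut K)) := by
      rw [hAutK, hcard]
      exact Nat.Coprime.coprime_dvd_right (Nat.totient_dvd_of_dvd hmdvd) hco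
    have hctriv := SB.hom_trivial_of_coprime (MulAut.conjNormal : G →* MulAut K) hcoK
    have hKle : K ≤ Subgroup.center G := by
      intro k hk
      rw [Subgroup.mem_center_iff]
      intro g
      have := congrArg Subtype.val (MulEquiv.ext_iff.mp (hctriv g) ⟨k, hk⟩)
      rw [MulAut.conjNormal_apply] at this
      simp only [MulAut.one_apply] at this
      rw [mul_inv_eq_iff_eq_mul] at this
      exact this
    -- the quotient by the center is cyclic, so `G` is abelian
    have hKidx : K.index = p := by
      have := Subgroup.card_mul_index K
      rw [hcard] at this
      rw [← hmdef] at this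
      exact Nat.eq_of_mul_eq_mul_left (Nat.pos_of_ne_zero hm0) (by omega)
    have hidx : (Subgroup.center G).index ∣ p := hKidx ▸ Subgroup.index_dvd_of_le hKle
    haveI : IsCyclic (G ⧸ Subgroup.center G) := by
      rcases (Nat.dvd_prime hp).mp hidx with h | h
      · haveI : Subsingleton (G ⧸ Subgroup.center G) := by
          rw [Subgroup.index_eq_card] at h
          exact (Nat.card_eq_one_iff_unique.mp h).1
        infer_instance
      · exact isCyclic_of_prime_card (α := G ⧸ Subgroup.center G) (p := p)
          (by rw [← Subgroup.index_eq_card]; exact h)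
    have hcomm : ∀ a b : G, a * b = b * a :=
      commutative_of_cyclic_center_quotient (QuotientGroup.mk' (Subgroup.center G))
        (by rw [QuotientGroup.ker_mk'])
    -- build an element of order `n`
    obtain ⟨k0, hk0⟩ := IsCyclic.exists_generator (α := K)
    have hordk : orderOf (k0 : G) = m := by
      rw [Subgroup.orderOf_coe, orderOf_eq_card_of_forall_mem_zpowers hk0]
    obtain ⟨x, hx⟩ := exists_prime_orderOf_dvd_card' (G := G) p (hcard ▸ hpn)
    have hcop : Nat.Coprime m p := by
      have : Squarefree (m * p) := hK ▸ hsf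
      exact (Nat.squarefree_mul_iff.mp this).1
    have hcmt : Commute (k0 : G) x := hcomm _ _
    have horder : orderOf ((k0 : G) * x) = n := by
      rw [hcmt.orderOf_mul_eq_mul_orderOf_of_coprime
        (by rw [hordk, hx]; exact hcop), hordk, hx, hK]
    exact isCyclic_of_orderOf_eq_card _ (by rw [horder, hcard])

/-! ### Basic consequences of the skew brace axiom -/

instance SB.addAutGroup (M : Type*) [Add M] : Group (AddAut M) :=
  inferInstanceAs (Group (Multiplicative (AddAut M)))

theorem SB.addAut_one_apply {M : Type*} [Add M] (m : M) : (1 : AddAut M) m = m := rfl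

theorem SB.addAut_mul_apply {M : Type*} [Add M] (e₁ e₂ : AddAut M) (m : M) :
    (e₁ * e₂) m = e₁ (e₂ m) := rfl

section SkewBraceBasic
variable {A : Type*} [SkewBrace A]

theorem SB.mul_zero (a : A) : a * 0 = a := by
  have h := SkewBrace.skew_left_distrib a 0 0
  rw [add_zero, sub_eq_add_neg] at h
  have h2 : a * 0 + 0 = a * 0 + (-a + a * 0) := by
    rw [add_zero, ← add_assoc]; exact h
  have h3 := add_left_cancel h2
  rwa [eq_comm, neg_add_eq_zero, eq_comm] at h3

theorem SB.one_eq_zero : (1 : A) = 0 := (SB.mul_zero 1).symm.trans (one_mul 0)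

theorem SB.mul_neg (a b : A) : a * (-b) = a + -(a * b) + a := by
  have h := SkewBrace.skew_left_distrib a b (-b)
  rw [add_neg_cancel, SB.mul_zero] at h
  have h3 : a * (-b) = -(a * b - a) + ((a * b - a) + a * (-b)) := (neg_add_cancel_left _ _).symm
  rw [← h, sub_eq_add_neg, neg_add_rev, neg_neg] at h3
  rw [h3, add_assoc]

/-- The lambda map of a skew brace, as a monoid hom to additive automorphisms. -/
def sbLambda : A →* AddAut A where
  toFun a :=
    { toFun := fun b => -a + a * b
      invFun := fun b => a⁻¹ * (a + b)
      left_inv := fun b => by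
        show a⁻¹ * (a + (-a + a * b)) = b
        rw [add_neg_cancel_left, ← mul_assoc, inv_mul_cancel, one_mul]
      right_inv := fun b => by
        show -a + a * (a⁻¹ * (a + b)) = b
        rw [mul_inv_cancel_left, neg_add_cancel_left]
      map_add' := fun b c => by
        show -a + a * (b + c) = (-a + a * b) + (-a + a * c)
        rw [SkewBrace.skew_left_distrib a b c]
        simp [sub_eq_add_neg, add_assoc] }
  map_one' := by
    ext b
    simp only [AddEquiv.coe_mk, Equiv.coe_fn_mk, one_mul, SB.addAut_one_apply]
    rw [SB.one_eq_zero, neg_zero, zero_add]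
  map_mul' := fun a b => by
    ext c
    simp only [AddEquiv.coe_mk, Equiv.coe_fn_mk, SB.addAut_mul_apply]
    rw [SkewBrace.skew_left_distrib a (-b) (b * c), SB.mul_neg, mul_assoc]
    simp [sub_eq_add_neg, add_assoc]

theorem sbLambda_apply (a b : A) : (sbLambda a : AddAut A) b = -a + a * b := rfl

end SkewBraceBasic

theorem SB.card_addAut_of_isAddCyclic {A : Type} [AddGroup A] [Finite A] (h : IsAddCyclic A) :
    Nat.card (AddAut A) = (Nat.card A).totient := by
  haveI : NeZero (Nat.card A) := ⟨Nat.card_pos.ne'⟩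
  have e : AddAut A ≃ (ZMod (Nat.card A))ˣ :=
    ((AddAut.congr (zmodAddCyclicAddEquiv h).symm).trans
      (ZMod.AddAutEquivUnits (Nat.card A))).toEquiv.trans Additive.toMul
  rw [Nat.card_congr e, Nat.card_eq_fintype_card, ZMod.card_units_eq_totient]

/-- A skew brace whose order `n` satisfies `gcd(n, φ(n)) = 1` is a trivial brace. -/
theorem SB.skewBrace_trivial_of_coprime {A : Type} [Fintype A] [SkewBrace A]
    (hco : Nat.Coprime (Fintype.card A) (Fintype.card A).totient) :
    (∀ a b : A, a + b = b + a) ∧ (∀ a b : A, a * b = a + b) := by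
  have hcardA : Nat.card A = Fintype.card A := Nat.card_eq_fintype_card
  have hcardM : Nat.card (Multiplicative A) = Fintype.card A := by
    rw [Nat.card_eq_fintype_card, Fintype.card_multiplicative]
  haveI : IsCyclic (Multiplicative A) :=
    SB.isCyclic_of_coprime_totient_aux (Fintype.card A) (Multiplicative A) inferInstance
      inferInstance hcardM hco
  have hacyc : IsAddCyclic A := isCyclic_multiplicative_iff.mp inferInstance
  have hcomm : ∀ a b : A, a + b = b + a := fun a b =>
    (IsAddCyclic.addCommGroup (α := A)).add_comm a b
  refine ⟨hcomm, fun a b => ?_⟩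
  haveI : Finite (AddAut A) :=
    Finite.of_injective (fun f : AddAut A => (f : A → A)) fun f g h => by
      ext x; exact congrFun h x
  have hAut : Nat.card (AddAut A) = (Fintype.card A).totient := by
    rw [SB.card_addAut_of_isAddCyclic hacyc, hcardA]
  have htriv := SB.hom_trivial_of_coprime (sbLambda (A := A))
    (by rw [hAut, hcardA]; exact hco) a
  have := congrArg (fun f : AddAut A => f b) htriv
  simp only [SB.addAut_one_apply] at this
  rw [sbLambda_apply] at this
  calc a * b = a + (-a + a * b) := (add_neg_cancel_left _ _).symm
    _ = a + b := by rw [this]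

/-! ### Counterexample constructions -/

section CircleBrace
variable {R : Type} [CommRing R]

/-- The circle group of a square-zero element in a commutative ring. -/
def circGroup (e : R) (he : e * e = 0) : Group R where
  mul a b := a + b + e * a * b
  one := 0
  inv a := -a + e * a ^ 2
  npow n x := @npowRec R ⟨0⟩ ⟨fun a b => a + b + e * a * b⟩ n x
  npow_zero _ := rfl
  npow_succ _ _ := rfl
  mul_assoc a b c := by
    show (a + b + e * a * b) + c + e * (a + b + e * a * b) * c
        = a + (b + c + e * b * c) + e * a * (b + c + e * b * c)
    ring
  one_mul b := by show 0 + b + e * 0 * b = b; ring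
  mul_one a := by show a + 0 + e * a * 0 = a; ring
  inv_mul_cancel a := by
    show (-a + e * a ^ 2) + a + e * (-a + e * a ^ 2) * a = 0
    linear_combination (a ^ 3) * he

/-- The skew brace attached to a square-zero element of a commutative ring. -/
def circSkewBrace (e : R) (he : e * e = 0) : SkewBrace R :=
  { (inferInstance : AddGroup R), circGroup e he with
    skew_left_distrib := fun a b c => by
      show a + (b + c) + e * a * (b + c) = (a + b + e * a * b) - a + (a + c + e * a * c)
      ring }

end CircleBrace

section SdpBrace
variable {M N : Type} [AddCommGroup M] [AddCommGroup N]

/-- The semidirect-product group structure on `M × N` attached to an action of `N` on `M`. -/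
def sdpGroup (φ : N →+ Additive (AddAut M)) : Group (M × N) where
  mul a b := (a.1 + Additive.toMul (φ a.2) b.1, a.2 + b.2)
  one := (0, 0)
  inv a := (-(Additive.toMul (φ (-a.2)) a.1), -a.2)
  mul_assoc a b c := by
    show ((a.1 + Additive.toMul (φ a.2) b.1) + Additive.toMul (φ (a.2 + b.2)) c.1,
        (a.2 + b.2) + c.2)
      = (a.1 + Additive.toMul (φ a.2) (b.1 + Additive.toMul (φ b.2) c.1), a.2 + (b.2 + c.2))
    rw [Prod.mk.injEq]
    constructor
    · rw [map_add φ, map_add (Additive.toMul (φ a.2)), add_assoc]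
      rfl
    · rw [add_assoc]
  one_mul b := by
    show ((0 : M) + Additive.toMul (φ 0) b.1, 0 + b.2) = b
    rw [map_zero φ, zero_add, zero_add]
    rfl
  mul_one a := by
    show (a.1 + Additive.toMul (φ a.2) 0, a.2 + 0) = a
    rw [map_zero (Additive.toMul (φ a.2)), add_zero, add_zero]
  inv_mul_cancel a := by
    show (-(Additive.toMul (φ (-a.2)) a.1) + Additive.toMul (φ (-a.2)) a.1, -a.2 + a.2)
      = (0, 0)
    rw [neg_add_cancel, neg_add_cancel]

/-- The skew brace on `M × N` attached to an action of `N` on `M`. -/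
def sdpSkewBrace (φ : N →+ Additive (AddAut M)) : SkewBrace (M × N) :=
  { (inferInstance : AddGroup (M × N)), sdpGroup φ with
    skew_left_distrib := fun a b c => by
      show (a.1 + Additive.toMul (φ a.2) (b.1 + c.1), a.2 + (b.2 + c.2))
        = (a.1 + Additive.toMul (φ a.2) b.1, a.2 + b.2) - a
          + (a.1 + Additive.toMul (φ a.2) c.1, a.2 + c.2)
      rw [map_add (Additive.toMul (φ a.2)), Prod.sub_def, Prod.mk.injEq]
      constructor
      · show _ = a.1 + Additive.toMul (φ a.2) b.1 - a.1 + (a.1 + Additive.toMul (φ a.2) c.1)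
        abel
      · show a.2 + (b.2 + c.2) = a.2 + b.2 - a.2 + (a.2 + c.2)
        abel }

end SdpBrace

theorem SB.coprime_totient_of_conditions {n : ℕ} (hn : 0 < n)
    (h1 : ∀ p ∈ n.primeFactors, n.factorization p = 1)
    (h2 : ∀ p ∈ n.primeFactors, ∀ q ∈ n.primeFactors, p ≠ q → ¬ p ∣ q - 1) :
    Nat.Coprime n n.totient := by
  have htot : n.totient = ∏ p ∈ n.primeFactors, (p - 1) := by
    rw [Nat.totient_eq_prod_factorization hn.ne', Finsupp.prod]
    refine Finset.prod_congr (by simp) fun p hp => ?_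
    rw [h1 p hp]
    simp
  rw [Nat.coprime_iff_gcd_eq_one]
  by_contra hg
  have hgn : Nat.gcd n n.totient ∣ n := Nat.gcd_dvd_left _ _
  have hgt : Nat.gcd n n.totient ∣ n.totient := Nat.gcd_dvd_right _ _
  have hg0 : Nat.gcd n n.totient ≠ 0 := fun hz => hn.ne' (by simpa [hz] using hgn)
  set r := (Nat.gcd n n.totient).minFac with hrdef
  have hr : r.Prime := Nat.minFac_prime hg
  have hrn : r ∣ n := (Nat.minFac_dvd _).trans hgn
  have hrt : r ∣ n.totient := (Nat.minFac_dvd _).trans hgt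
  have hrpf : r ∈ n.primeFactors := Nat.mem_primeFactors.mpr ⟨hr, hrn, hn.ne'⟩
  rw [htot] at hrt
  obtain ⟨q, hqpf, hqdvd⟩ := hr.prime.exists_mem_finset_dvd hrt
  rcases eq_or_ne r q with rfl | hne
  · have h2le := hr.two_le
    have := Nat.le_of_dvd (by omega) hqdvd
    omega
  · exact h2 r hrpf q hqpf hne hqdvd

/-- **Theorem A (1)⇔(2)**: every skew brace of order `n` is a trivial brace
(abelian additive group and `a ∘ b = a + b`) if and only if `n` is square-free
and `p ∤ q - 1` for all distinct primes `p, q` dividing `n`. -/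
theorem every_skewBrace_is_trivial_brace_iff (n : ℕ) (hn : 0 < n) :
    (∀ (A : Type) [Fintype A] [SkewBrace A], Fintype.card A = n →
      ((∀ a b : A, a + b = b + a) ∧ (∀ a b : A, a * b = a + b))) ↔
    ((∀ p ∈ n.primeFactors, n.factorization p = 1) ∧
      (∀ p ∈ n.primeFactors, ∀ q ∈ n.primeFactors, p ≠ q → ¬ p ∣ q - 1)) := by
  constructor
  · intro h
    constructor
    · -- squarefreeness: otherwise use the circle brace on `ZMod n`
      intro p hp
      by_contra hne
      have hp' : p.Prime := Nat.prime_of_mem_primeFactors hp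
      have hpd : p ∣ n := Nat.dvd_of_mem_primeFactors hp
      have h2 : 2 ≤ n.factorization p := by
        have hone : 1 ≤ n.factorization p :=
          (Nat.Prime.dvd_iff_one_le_factorization hp' hn.ne').mp hpd
        omega
      have hp2 : p ^ 2 ∣ n := (Nat.Prime.pow_dvd_iff_le_factorization hp' hn.ne').mpr h2
      haveI : NeZero n := ⟨hn.ne'⟩
      obtain ⟨k, hk⟩ := hp2
      have hdiv : n / p = p * k := by
        rw [hk, pow_two, mul_assoc, Nat.mul_div_cancel_left _ hp'.pos]
      set e : ZMod n := ((n / p : ℕ) : ZMod n) with hedef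
      have he : e * e = 0 := by
        rw [hedef, ← Nat.cast_mul, ZMod.natCast_eq_zero_iff]
        exact ⟨k, by rw [hdiv, hk]; ring⟩
      have hcard : Fintype.card (ZMod n) = n := ZMod.card n
      have htr := (@h (ZMod n) inferInstance (circSkewBrace e he) hcard).2 1 1
      have htr' : (1 : ZMod n) + 1 + e * 1 * 1 = 1 + 1 := htr
      have he0 : e = 0 := by linear_combination htr'
      have hplt : 1 < p := hp'.one_lt
      have hnp_pos : 0 < n / p := Nat.div_pos (Nat.le_of_dvd hn hpd) hp'.pos
      have hnp_lt : n / p < n := Nat.div_lt_self hn hplt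
      rw [hedef, ZMod.natCast_eq_zero_iff] at he0
      have := Nat.le_of_dvd hnp_pos he0
      omega
    · -- the condition `p ∤ q - 1`: otherwise use a semidirect-product brace
      intro p hp q hq hne hdvd
      have hp' : p.Prime := Nat.prime_of_mem_primeFactors hp
      have hq' : q.Prime := Nat.prime_of_mem_primeFactors hq
      have hpd : p ∣ n := Nat.dvd_of_mem_primeFactors hp
      have hqd : q ∣ n := Nat.dvd_of_mem_primeFactors hq
      haveI : Fact p.Prime := ⟨hp'⟩
      haveI : Fact q.Prime := ⟨hq'⟩
      set m := n / q with hmdef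
      have hm : q * m = n := Nat.mul_div_cancel' hqd
      have hm0 : m ≠ 0 := by
        rintro h0; rw [h0, mul_zero] at hm; omega
      haveI : NeZero m := ⟨hm0⟩
      have hpm : p ∣ m := by
        have hco : Nat.Coprime p q := (Nat.coprime_primes hp' hq').mpr hne
        exact hco.dvd_of_dvd_mul_left (hm ▸ hpd)
      -- a unit of order `p` in `ZMod q`
      have hcardU : Fintype.card (ZMod q)ˣ = q - 1 := by
        rw [ZMod.card_units_eq_totient, Nat.totient_prime hq']
      obtain ⟨c, hc⟩ := exists_prime_orderOf_dvd_card (G := (ZMod q)ˣ) p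
        (by rw [hcardU]; exact hdvd)
      set α : AddAut (ZMod q) := AddAut.mulLeft c with hαdef
      have hα : α ^ p = 1 := by
        rw [hαdef]
        exact (by rw [← map_pow, ← hc, pow_orderOf_eq_one, map_one] : AddAut.mulLeft c ^ p = 1)
      have hf0 : (zmultiplesHom (Additive (AddAut (ZMod q))) (Additive.ofMul α)) (p : ℤ) = 0 := by
        rw [zmultiplesHom_apply, ← ofMul_zpow, zpow_natCast, hα]
        rfl
      set φ : ZMod m →+ Additive (AddAut (ZMod q)) :=
        (ZMod.lift p ⟨zmultiplesHom (Additive (AddAut (ZMod q))) (Additive.ofMul α), hf0⟩).comp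
          (ZMod.castHom hpm (ZMod p)).toAddMonoidHom with hφdef
      have hcard : Fintype.card (ZMod q × ZMod m) = n := by
        rw [Fintype.card_prod, ZMod.card, ZMod.card, hm]
      have htr := (@h (ZMod q × ZMod m) inferInstance (sdpSkewBrace φ) hcard).2 (0, 1) (1, 0)
      have htr' : ((0 : ZMod q) + Additive.toMul (φ 1) 1, (1 : ZMod m) + 0)
          = ((0 : ZMod q) + 1, (1 : ZMod m) + 0) := htr
      have hfst := congrArg Prod.fst htr'
      simp only [zero_add] at hfst
      have hφ1 : φ (1 : ZMod m) = Additive.ofMul α := by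
        rw [hφdef]
        show (ZMod.lift p ⟨zmultiplesHom (Additive (AddAut (ZMod q))) (Additive.ofMul α), hf0⟩)
          ((ZMod.castHom hpm (ZMod p)) 1) = _
        rw [map_one]
        have h1 : ((1 : ℤ) : ZMod p) = 1 := by push_cast; ring
        rw [← h1, ZMod.lift_coe]
        show (1 : ℤ) • Additive.ofMul α = _
        rw [one_zsmul]
      rw [hφ1] at hfst
      have hc1 : (c : ZMod q) = 1 := by
        have : α (1 : ZMod q) = 1 := hfst
        rw [hαdef] at this
        simpa [Units.smul_def] using this
      have : c = 1 := Units.val_eq_one.mp hc1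
      rw [this, orderOf_one] at hc
      exact hp'.one_lt.ne' hc.symm
  · rintro ⟨h1, h2⟩ A _ _ hcard
    exact SB.skewBrace_trivial_of_coprime
      (by rw [hcard]; exact SB.coprime_totient_of_conditions hn h1 h2)
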